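/- Let Ω ⊆ ℝⁿ be open, 1 < p < ∞, and u ∈ C¹(Ω) a feeble viscosity subsolution of ((p−2) Du ⊗ Du + |Du|² I) : D²u ≥ 0 on Ω. Then for every bounded open Ω' with closure in Ω, every x ∈ closure(Ω') with |Du(x)| = sup_{Ω'}|Du|, every X ∈ D^{2,+}u(x), every ξ ≥ 0 and a ∈ ℝ, the affine function A(z) = a + ξ ((p−2)X + tr(X) I) Du(x) · z satisfies ‖Du‖_{L^∞(Ω')} ≤ ‖Du + DA‖_{L^∞(Ω')}. -/

import Mathlib

open scoped BigOperators

/-- The gradient vector `Du(x) ∈ ℝⁿ` of a scalar function `u : ℝⁿ → ℝ`. -/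
noncomputable def gradv {n : ℕ} (u : (Fin n → ℝ) → ℝ) (x : Fin n → ℝ) : Fin n → ℝ :=
  fun i => fderiv ℝ u x (Pi.single i 1)

/-- The Euclidean norm of a vector in `ℝⁿ`. -/
noncomputable def gnorm {n : ℕ} (z : Fin n → ℝ) : ℝ :=
  Real.sqrt (∑ i, (z i) ^ 2)

/-- The feeble second-order superderivatives `D^{2,+}u(x)`: symmetric matrices `X` with
`Du(x) ≠ 0` and `u(x+z) ≤ u(x) + Du(x)·z + ½ X : z ⊗ z + o(|z|²)` as `z → 0`. -/
def D2plus {n : ℕ} (u : (Fin n → ℝ) → ℝ) (x : Fin n → ℝ) :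
    Set (Matrix (Fin n) (Fin n) ℝ) :=
  {X | X.IsSymm ∧ gradv u x ≠ 0 ∧
    ∀ ε : ℝ, 0 < ε → ∃ δ : ℝ, 0 < δ ∧ ∀ z : Fin n → ℝ, gnorm z < δ →
      u (x + z) ≤ u x + (∑ i, gradv u x i * z i)
        + (1 / 2) * (∑ i, ∑ j, X i j * z i * z j) + ε * (gnorm z) ^ 2}

/-- The `L^∞` norm `‖Du‖_{L^∞(S)}` of the gradient over a set `S`. -/
noncomputable def supDu {n : ℕ} (u : (Fin n → ℝ) → ℝ) (S : Set (Fin n → ℝ)) : ℝ :=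
  sSup ((fun y => gnorm (gradv u y)) '' S)

lemma gnorm_le_gnorm_add {n : ℕ} (w c : Fin n → ℝ) (h : 0 ≤ ∑ i, w i * c i) :
    gnorm w ≤ gnorm (w + c) := by
  unfold gnorm
  apply Real.sqrt_le_sqrt
  have hc2 : 0 ≤ ∑ i, (c i) ^ 2 := Finset.sum_nonneg fun i _ => sq_nonneg _
  have : ∑ i, ((w + c) i) ^ 2
      = ∑ i, (w i) ^ 2 + 2 * (∑ i, w i * c i) + ∑ i, (c i) ^ 2 := by
    simp only [Pi.add_apply, add_sq, Finset.sum_add_distrib, Finset.mul_sum]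
    ring_nf
  rw [this]; linarith

lemma continuous_gnorm {n : ℕ} : Continuous (gnorm : (Fin n → ℝ) → ℝ) :=
  Real.continuous_sqrt.comp (continuous_finset_sum _ fun i _ => (continuous_apply i).pow 2)

/-- Theorem 4.3, (b) ⇒ (c): if `u ∈ C¹(Ω)` is a feeble viscosity
subsolution of `((p−2) Du ⊗ Du + |Du|² I) : D²u ≥ 0` on `Ω`, then for every `Ω' ⋐ Ω`,
`x ∈ Ω'(u)`, `X ∈ D^{2,+}u(x)`, `ξ ≥ 0`, `a ∈ ℝ`, the affine function
`A(z) = a + ξ ((p−2)X + tr(X) I) Du(x) · z` satisfies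
`‖Du‖_{L^∞(Ω')} ≤ ‖Du + DA‖_{L^∞(Ω')}`. -/
theorem stmt11 {n : ℕ} (Ω : Set (Fin n → ℝ)) (hΩ : IsOpen Ω) (p : ℝ)
    (hp1 : 1 < p)
    (u : (Fin n → ℝ) → ℝ) (hu : ContDiffOn ℝ 1 u Ω)
    (hsub : ∀ x ∈ Ω, ∀ X ∈ D2plus u x,
      0 ≤ (p - 2) * (∑ i, ∑ j, X i j * (gradv u x i * gradv u x j)) +
        (∑ i, (gradv u x i) ^ 2) * Matrix.trace X) :
    ∀ Ω' : Set (Fin n → ℝ), IsOpen Ω' → Bornology.IsBounded Ω' → closure Ω' ⊆ Ω →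
      ∀ x ∈ closure Ω', gnorm (gradv u x) = supDu u Ω' →
      ∀ X ∈ D2plus u x, ∀ ξ : ℝ, 0 ≤ ξ → ∀ _a : ℝ,
        supDu u Ω' ≤
          sSup ((fun y => gnorm (gradv u y +
            ξ • ((p - 2) • X + Matrix.trace X • (1 : Matrix (Fin n) (Fin n) ℝ)).mulVec
              (gradv u x))) '' Ω') := by
  intro Ω' hΩ'open hΩ'bdd hcl x hx hsup X hX ξ hξ _a
  set w : Fin n → ℝ := gradv u x with hw
  set c : Fin n → ℝ :=
    ξ • ((p - 2) • X + Matrix.trace X • (1 : Matrix (Fin n) (Fin n) ℝ)).mulVec w with hc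
  have hxΩ : x ∈ Ω := hcl hx
  -- key nonnegativity of w ⬝ c
  have hdot : 0 ≤ ∑ i, w i * c i := by
    have h0 := hsub x hxΩ X hX
    have hsum : ∑ i, w i * c i
        = ξ * ((p - 2) * (∑ i, ∑ j, X i j * (w i * w j)) +
            (∑ i, (w i) ^ 2) * Matrix.trace X) := by
      simp only [hc, Pi.smul_apply, Matrix.mulVec, dotProduct, Matrix.add_apply,
        Matrix.smul_apply, Matrix.one_apply, smul_eq_mul, add_mul, ite_mul, mul_ite,
        mul_one, mul_zero, zero_mul, Finset.sum_add_distrib, Finset.sum_ite_eq,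
        Finset.mem_univ, if_true, Finset.mul_sum, mul_add]
      congr 1
      · apply Finset.sum_congr rfl; intro i _
        apply Finset.sum_congr rfl; intro j _; ring
      · rw [Finset.sum_mul, Finset.mul_sum]
        apply Finset.sum_congr rfl; intro i _; ring
    rw [hsum]
    exact mul_nonneg hξ h0
  have hkey : gnorm w ≤ gnorm (w + c) := gnorm_le_gnorm_add w c hdot
  -- continuity of the relevant function on Ω
  have hgrad : ContinuousOn (fun y => gradv u y) Ω := by
    have hf : ContinuousOn (fderiv ℝ u) Ω := hu.continuousOn_fderiv_of_isOpen hΩ le_rfl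
    exact continuousOn_pi.2 fun i => hf.clm_apply continuousOn_const
  set f : (Fin n → ℝ) → ℝ := fun y => gnorm (gradv u y + c) with hf_def
  have hfcont : ContinuousOn f Ω :=
    continuous_gnorm.comp_continuousOn (hgrad.add continuousOn_const)
  -- compactness and bddAbove
  have hK : IsCompact (closure Ω') :=
    Metric.isCompact_of_isClosed_isBounded isClosed_closure hΩ'bdd.closure
  have hKimg : IsCompact (f '' closure Ω') := hK.image_of_continuousOn (hfcont.mono hcl)
  have hbdd : BddAbove (f '' Ω') :=
    hKimg.bddAbove.mono (Set.image_mono subset_closure)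
  -- f x belongs to the closure of f '' Ω'
  have hmem : f x ∈ closure (f '' Ω') :=
    (hfcont.mono hcl).image_closure ⟨x, hx, rfl⟩
  have hfx_le : f x ≤ sSup (f '' Ω') := by
    have hsub' : closure (f '' Ω') ⊆ {y | y ≤ sSup (f '' Ω')} :=
      closure_minimal (fun s hs => le_csSup hbdd hs)
        (isClosed_le continuous_id continuous_const)
    exact hsub' hmem
  have : supDu u Ω' = gnorm w := hsup.symm
  rw [this]
  calc gnorm w ≤ gnorm (w + c) := hkey
    _ = f x := by simp [hf_def, hw, add_comm]
    _ ≤ _ := hfx_le
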